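/- arXiv:2602.04097 — 3 statements merged into one kernel-verified Lean document; each statement's English description precedes it below -/
import Mathlib

section
/- If a subshift X is topologically mixing, then every term X_n of its SFT cover is topologically mixing. -/
open Filter Topology MeasureTheory Set

def shiftMap (A : Type*) : (ℤ → A) → (ℤ → A) := fun x n => x (n + 1)

def occursAt {A : Type*} (x : ℤ → A) (i : ℤ) (w : List A) : Prop :=
  ∀ j : Fin w.length, x (i + (j : ℕ)) = w.get j

def inLang {A : Type*} (X : Set (ℤ → A)) (w : List A) : Prop :=
  ∃ x ∈ X, occursAt x 0 w

def sftCover {A : Type*} (X : Set (ℤ → A)) (n : ℕ) : Set (ℤ → A) :=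
  { x | ∀ (i : ℤ) (w : List A), w.length ≤ n → occursAt x i w → inLang X w }

def IsSubshift {A : Type*} [TopologicalSpace A] (X : Set (ℤ → A)) : Prop :=
  X.Nonempty ∧ IsClosed X ∧ shiftMap A '' X = X

def minPeriodPts {A : Type*} (S : Set (ℤ → A)) (p : ℕ) : Set (ℤ → A) :=
  { x ∈ S | (shiftMap A)^[p] x = x ∧ ∀ q : ℕ, 0 < q → q < p → (shiftMap A)^[q] x ≠ x }

def PeriodStable {A : Type*} (X : Set (ℤ → A)) : Prop :=
  ∀ m : ℕ, ∃ n p : ℕ, 0 < p ∧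
    minPeriodPts (sftCover X n) p = minPeriodPts (sftCover X (n + m)) p

def LanguageStable {A : Type*} (X : Set (ℤ → A)) : Prop :=
  ∀ m : ℕ, ∃ n : ℕ, sftCover X n = sftCover X (n + m)

def TopMixing {A : Type*} (X : Set (ℤ → A)) : Prop :=
  ∀ u v : List A, inLang X u → inLang X v →
    ∃ N : ℕ, ∀ n ≥ N, ∃ w : List A, w.length = n ∧ inLang X (u ++ w ++ v)

def LangTransitive {A : Type*} (X : Set (ℤ → A)) : Prop :=
  ∀ u v : List A, inLang X u → inLang X v → ∃ w : List A, inLang X (u ++ w ++ v)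

def globalSlide {A : Type*} (R : ℕ) (Φ : List A → A) : (ℤ → A) → (ℤ → A) :=
  fun x i => Φ (List.ofFn (fun j : Fin (2 * R + 1) => x (i - R + (j : ℕ))))

def wordSlide {A : Type*} (R : ℕ) (Φ : List A → A) (w : List A) : List A :=
  (List.range (w.length - 2 * R)).map (fun j => Φ ((w.drop j).take (2 * R + 1)))

noncomputable def subshiftEntropy {A : Type*} (X : Set (ℤ → A)) : ℝ :=
  Filter.limsup
    (fun n : ℕ => Real.log (Nat.card { w : List A // w.length = n ∧ inLang X w }) / n)
    Filter.atTop

def IsNNSFT {A : Type*} (X : Set (ℤ → A)) : Prop :=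
  ∃ F : Set (List A), (∀ w ∈ F, w.length ≤ 2) ∧
    X = { x | ∀ (i : ℤ) (w : List A), w ∈ F → ¬ occursAt x i w }

noncomputable def xi (s : ℕ) : ℝ :=
  30 * (s : ℝ) ^ (3 * (s ^ 2 + 1)) /
    (1 - Real.rpow (1 - 1 / (4 * (s : ℝ) ^ (2 * s ^ 2))) (1 / (s ^ 2 : ℝ)))

noncomputable def measEntropy {A : Type*} [Fintype A] [MeasurableSpace A]
    (μ : MeasureTheory.Measure (ℤ → A)) : ℝ :=
  Filter.limsup
    (fun n : ℕ =>
      (∑ w : Fin n → A,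
        Real.negMulLog ((μ { x : ℤ → A | ∀ j : Fin n, x ((j : ℕ) : ℤ) = w j }).toReal)) / n)
    Filter.atTop

section Aux
variable {A : Type*}

def wordAt (x : ℤ → A) (i : ℤ) (L : ℕ) : List A :=
  List.ofFn (fun j : Fin L => x (i + j))

@[simp] lemma length_wordAt (x : ℤ → A) (i : ℤ) (L : ℕ) : (wordAt x i L).length = L := by
  simp [wordAt]

lemma getElem_wordAt (x : ℤ → A) (i : ℤ) (L : ℕ) (j : ℕ) (h : j < (wordAt x i L).length) :
    (wordAt x i L)[j] = x (i + j) := by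
  simp [wordAt]

lemma occursAt_wordAt (x : ℤ → A) (i : ℤ) (L : ℕ) : occursAt x i (wordAt x i L) := by
  intro j
  rw [List.get_eq_getElem, getElem_wordAt]

lemma shift_mem_sftCover {X : Set (ℤ → A)} {n : ℕ} {y : ℤ → A} (hy : y ∈ sftCover X n)
    (k : ℤ) : (fun i => y (i + k)) ∈ sftCover X n := by
  intro i w hw hocc
  apply hy (i + k) w hw
  intro j
  have := hocc j
  simp only at this
  rw [← this]
  congr 1
  ring

lemma shift_mem_subshift [TopologicalSpace A] {X : Set (ℤ → A)} (hX : IsSubshift X)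
    {x : ℤ → A} (hx : x ∈ X) (k : ℤ) : (fun i => x (i + k)) ∈ X := by
  obtain ⟨-, -, hsh⟩ := hX
  induction k using Int.induction_on with
  | zero => simpa using hx
  | succ i ih =>
      have : shiftMap A (fun j => x (j + i)) ∈ X := by
        rw [← hsh]; exact Set.mem_image_of_mem _ ih
      convert this using 1
      funext j
      simp only [shiftMap]
      congr 1
      ring
  | pred i ih =>
      have hz : (fun j => x (j + -(i:ℤ))) ∈ shiftMap A '' X := by rw [hsh]; exact ih
      obtain ⟨z, hzX, hz2⟩ := hz
      have : z = fun j => x (j + (-(i:ℤ) - 1)) := by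
        funext j
        have := congrFun hz2 (j - 1)
        simp only [shiftMap] at this
        rw [show j - 1 + 1 = j by ring] at this
        rw [show j + (-(i:ℤ) - 1) = j - 1 + -(i:ℤ) by ring, ← this]
      rw [this] at hzX
      exact hzX

lemma subshift_subset_sftCover [TopologicalSpace A] {X : Set (ℤ → A)} (hX : IsSubshift X)
    (n : ℕ) : X ⊆ sftCover X n := by
  intro x hx i w _ hocc
  refine ⟨fun j => x (j + i), shift_mem_subshift hX hx i, ?_⟩
  intro j
  have := hocc j
  rw [← this]
  simp only
  congr 1
  ring

lemma splice_mem_sftCover {X : Set (ℤ → A)} {n : ℕ} {x y : ℤ → A}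
    (hx : x ∈ sftCover X n) (hy : y ∈ sftCover X n) (p : ℤ)
    (hagree : ∀ i : ℤ, p - n < i → i ≤ p → x i = y i) :
    (fun i => if i ≤ p then x i else y i) ∈ sftCover X n := by
  intro i w hw hocc
  have hwn : (w.length : ℤ) ≤ n := by exact_mod_cast hw
  by_cases hcase : i + w.length ≤ p + 1
  · apply hx i w hw
    intro j
    have hj := hocc j
    have hjw : (j : ℤ) < w.length := by exact_mod_cast j.isLt
    simp only at hj
    rwa [if_pos (by omega)] at hj
  · apply hy i w hw
    intro j
    have hj := hocc j
    have hjw : (j : ℤ) < w.length := by exact_mod_cast j.isLt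
    simp only at hj
    by_cases h2 : i + (j : ℕ) ≤ p
    · rw [if_pos h2] at hj
      rw [← hj]
      exact (hagree _ (by omega) h2).symm
    · rwa [if_neg h2] at hj

end Aux

theorem sftCover_mixing {A : Type*} [Fintype A] [TopologicalSpace A] [DiscreteTopology A]
    (X : Set (ℤ → A)) (hX : IsSubshift X) (hmix : TopMixing X) (n : ℕ) :
    TopMixing (sftCover X n) := by
  intro u v hu hv
  obtain ⟨x, hx, hxu⟩ := hu
  obtain ⟨y, hy, hyv⟩ := hv
  set a : List A := wordAt x (u.length : ℤ) n with ha_def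
  set b : List A := wordAt y (-(n : ℤ)) n with hb_def
  have ha : inLang X a := hx (u.length : ℤ) a (by simp [ha_def]) (occursAt_wordAt _ _ _)
  have hb : inLang X b := hy (-(n : ℤ)) b (by simp [hb_def]) (occursAt_wordAt _ _ _)
  obtain ⟨N, hN⟩ := hmix a b ha hb
  refine ⟨N + 2 * n, fun len hlen => ?_⟩
  obtain ⟨w, hwlen, ζ0, hζ0X, hζocc⟩ := hN (len - 2 * n) (by omega)
  set m : ℕ := len - 2 * n with hm_def
  have hab_len : (a ++ w ++ b).length = n + m + n := by
    simp [ha_def, hb_def, hwlen]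
    omega
  have hval : ∀ (j : ℕ) (h : j < (a ++ w ++ b).length), ζ0 (j : ℤ) = (a ++ w ++ b)[j] := by
    intro j h
    have := hζocc ⟨j, h⟩
    simpa using this
  have haw_len : (a ++ w).length = n + m := by simp [ha_def, hwlen]
  have facta : ∀ j : ℕ, j < n → ζ0 (j : ℤ) = x ((u.length : ℤ) + j) := by
    intro j hj
    rw [hval j (by omega)]
    rw [List.getElem_append_left (by omega), List.getElem_append_left (by simp [ha_def]; omega),
      getElem_wordAt]
  have factb : ∀ j : ℕ, n + m ≤ j → j < n + m + n →
      ζ0 (j : ℤ) = y ((j : ℤ) - n - m - n) := by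
    intro j h1 h2
    rw [hval j (by omega)]
    rw [List.getElem_append_right (by omega), List.getElem_of_eq hb_def, getElem_wordAt]
    congr 1
    omega
  set ζ : ℤ → A := fun i => ζ0 (i + -(u.length : ℤ)) with hζ_def
  have hζX : ζ ∈ sftCover X n :=
    subshift_subset_sftCover hX n (shift_mem_subshift hX hζ0X _)
  set q0 : ℤ := (u.length : ℤ) + n + m + n with hq0_def
  set y' : ℤ → A := fun i => y (i + -q0) with hy'_def
  have hy'mem : y' ∈ sftCover X n := shift_mem_sftCover hy _
  set p1 : ℤ := (u.length : ℤ) + n - 1 with hp1_def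
  set z1 : ℤ → A := fun i => if i ≤ p1 then x i else ζ i with hz1_def
  have hz1 : z1 ∈ sftCover X n := by
    rw [hz1_def]
    apply splice_mem_sftCover hx hζX
    intro i h1 h2
    obtain ⟨j, hj1, hj2⟩ : ∃ j : ℕ, (j : ℤ) = i - u.length ∧ j < n :=
      ⟨(i - u.length).toNat, by omega, by omega⟩
    simp only [hζ_def]
    rw [show i + -(u.length : ℤ) = (j : ℤ) from by omega, facta j hj2,
      show (u.length : ℤ) + j = i from by omega]
  set p2 : ℤ := q0 - 1 with hp2_def
  set z : ℤ → A := fun i => if i ≤ p2 then z1 i else y' i with hz_def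
  have hzmem : z ∈ sftCover X n := by
    rw [hz_def]
    apply splice_mem_sftCover hz1 hy'mem
    intro i h1 h2
    have hip1 : ¬ i ≤ p1 := by omega
    simp only [hz1_def, hy'_def, if_neg hip1, hζ_def]
    obtain ⟨j, hj1, hj2, hj3⟩ : ∃ j : ℕ, (j : ℤ) = i - u.length ∧ n + m ≤ j ∧ j < n + m + n :=
      ⟨(i - u.length).toNat, by omega, by omega, by omega⟩
    rw [show i + -(u.length : ℤ) = (j : ℤ) from by omega, factb j hj2 hj3]
    congr 1
    omega
  set w' : List A := wordAt z (u.length : ℤ) (2 * n + m) with hw'_def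
  have hw'len : w'.length = len := by simp [hw'_def]; omega
  refine ⟨w', hw'len, z, hzmem, ?_⟩
  intro j
  have hk : (j : ℕ) < u.length + (2 * n + m) + v.length := by
    have h0 := j.isLt
    simp only [List.length_append, hw'len] at h0
    omega
  set k : ℕ := (j : ℕ) with hk_def
  rw [List.get_eq_getElem]
  show z (0 + (k : ℤ)) = (u ++ w' ++ v)[k]
  rcases lt_or_ge k u.length with hcase | hcase
  · rw [List.getElem_append_left (by simp [hw'_def]; omega), List.getElem_append_left hcase]
    simp only [hz_def, hz1_def, zero_add]
    rw [if_pos (by omega), if_pos (by omega)]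
    have h := hxu ⟨k, hcase⟩
    rw [List.get_eq_getElem] at h
    simpa using h
  · rcases lt_or_ge k (u.length + (2 * n + m)) with hcase2 | hcase2
    · rw [List.getElem_append_left (by simp only [List.length_append, hw'len]; omega),
        List.getElem_append_right hcase, List.getElem_of_eq hw'_def, getElem_wordAt]
      congr 1
      omega
    · have hlen2 : (u ++ w').length = u.length + (2 * n + m) := by
        simp only [List.length_append, hw'len]
        omega
      rw [List.getElem_append_right (by omega)]
      have hkv : k - (u ++ w').length < v.length := by omega
      have h := hyv ⟨k - (u ++ w').length, hkv⟩
      rw [List.get_eq_getElem] at h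
      simp only [Fin.val_mk] at h
      simp only [hz_def, hy'_def, zero_add]
      rw [if_neg (by omega)]
      rw [← h]
      congr 1
      omega
end

section
/- If X is period stable and Y is topologically conjugate to X, then Y is period stable. -/
open Filter Topology MeasureTheory Set

namespace PSAux

def shiftZ {A : Type*} (k : ℤ) (x : ℤ → A) : ℤ → A := fun n => x (n + k)

theorem shiftMap_mem {A : Type*} [TopologicalSpace A] {X : Set (ℤ → A)} (hX : IsSubshift X)
    {x : ℤ → A} (hx : x ∈ X) : shiftMap A x ∈ X := by
  have h := hX.2.2
  rw [← h]
  exact Set.mem_image_of_mem _ hx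

theorem shiftMap_injective {A : Type*} : Function.Injective (shiftMap A) := by
  intro x y h
  funext n
  have := congrFun h (n - 1)
  simpa [shiftMap] using this

theorem shiftZ_mem {A : Type*} [TopologicalSpace A] {X : Set (ℤ → A)} (hX : IsSubshift X)
    (k : ℤ) {x : ℤ → A} (hx : x ∈ X) : shiftZ k x ∈ X := by
  induction k using Int.induction_on with
  | zero => convert hx using 1; funext n; simp [shiftZ]
  | succ k ih =>
      have : shiftZ (k + 1) x = shiftMap A (shiftZ k x) := by
        funext n; simp only [shiftZ, shiftMap]; ring_nf
      rw [this]; exact shiftMap_mem hX ih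
  | pred k ih =>
      have h1 : shiftZ (-k) x ∈ shiftMap A '' X := by rw [hX.2.2]; exact ih
      obtain ⟨w, hwX, hw⟩ := h1
      have : shiftZ (-k - 1) x = w := by
        funext n
        have h2 := congrFun hw (n - 1)
        simp only [shiftMap, shiftZ] at h2 ⊢
        have e1 : n - 1 + 1 = n := by ring
        have e2 : n + (-(k:ℤ) - 1) = n - 1 + -(k:ℤ) := by ring
        rw [e2, ← h2, e1]
      rw [this]; exact hwX

theorem map_shiftZ {A B : Type*} [TopologicalSpace A] {X : Set (ℤ → A)}
    (hX : IsSubshift X) (f : (ℤ → A) → (ℤ → B))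
    (hcomm : ∀ x ∈ X, f (shiftMap A x) = shiftMap B (f x)) :
    ∀ (k : ℤ), ∀ x ∈ X, f (shiftZ k x) = shiftZ k (f x) := by
  intro k
  induction k using Int.induction_on with
  | zero =>
      intro x hx
      have e : shiftZ (0:ℤ) x = x := by funext n; simp [shiftZ]
      have e2 : shiftZ (0:ℤ) (f x) = f x := by funext n; simp [shiftZ]
      rw [e, e2]
  | succ k ih =>
      intro x hx
      have e : shiftZ (k + 1) x = shiftMap A (shiftZ k x) := by
        funext n; simp only [shiftZ, shiftMap]; ring_nf
      rw [e, hcomm _ (shiftZ_mem hX k hx), ih x hx]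
      funext n; simp only [shiftZ, shiftMap]; ring_nf
  | pred k ih =>
      intro x hx
      have hu : shiftZ (-k - 1) x ∈ X := shiftZ_mem hX _ hx
      have e : shiftMap A (shiftZ (-k - 1) x) = shiftZ (-k) x := by
        funext n; simp only [shiftZ, shiftMap]; ring_nf
      apply shiftMap_injective (A := B)
      have h3 : f (shiftMap A (shiftZ (-k-1) x)) = shiftMap B (f (shiftZ (-k-1) x)) := hcomm _ hu
      rw [e, ih x hx] at h3
      rw [← h3]
      funext n; simp only [shiftZ, shiftMap]; ring_nf

theorem inLang_of_occursAt {A : Type*} [TopologicalSpace A] {X : Set (ℤ → A)}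
    (hX : IsSubshift X) {x : ℤ → A} (hx : x ∈ X) {i : ℤ} {w : List A}
    (h : occursAt x i w) : inLang X w := by
  refine ⟨shiftZ i x, shiftZ_mem hX i hx, fun j => ?_⟩
  simp only [shiftZ]
  rw [← h j]; congr 1; ring

theorem box_mem_nhds {A : Type*} [TopologicalSpace A] [DiscreteTopology A]
    (x : ℤ → A) (I : Finset ℤ) :
    {y : ℤ → A | ∀ i ∈ I, y i = x i} ∈ 𝓝 x := by
  rw [nhds_pi, Filter.mem_pi]
  refine ⟨I, I.finite_toSet, fun i => {x i}, fun i => ?_, fun y hy i hi => ?_⟩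
  · rw [mem_nhds_discrete]; rfl
  · exact hy i hi

theorem exists_box_subset {A : Type*} [TopologicalSpace A] [DiscreteTopology A]
    {x : ℤ → A} {s : Set (ℤ → A)} (hs : s ∈ 𝓝 x) :
    ∃ I : Finset ℤ, {y : ℤ → A | ∀ i ∈ I, y i = x i} ⊆ s := by
  rw [nhds_pi, Filter.mem_pi] at hs
  obtain ⟨I, hIf, t, ht, hsub⟩ := hs
  refine ⟨hIf.toFinset, fun y hy => hsub fun i hi => ?_⟩
  have h1 : y i = x i := hy i (hIf.mem_toFinset.2 hi)
  have h2 : x i ∈ t i := (mem_nhds_discrete).1 (ht i)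
  rw [h1]; exact h2

theorem chl {A B : Type*} [Finite A] [TopologicalSpace A] [DiscreteTopology A]
    [TopologicalSpace B] [DiscreteTopology B]
    {X : Set (ℤ → A)} (hXc : IsClosed X) (f : (ℤ → A) → (ℤ → B))
    (hfc : ContinuousOn f X) :
    ∃ r : ℕ, ∀ x ∈ X, ∀ x' ∈ X, (∀ j : ℤ, j.natAbs ≤ r → x j = x' j) → f x 0 = f x' 0 := by
  have hcomp : IsCompact X := hXc.isCompact
  have key : ∀ x ∈ X, ∃ I : Finset ℤ, ∀ y ∈ X, (∀ i ∈ I, y i = x i) → f y 0 = f x 0 := by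
    intro x hx
    have h0 : ContinuousWithinAt (fun y => f y 0) X x :=
      ContinuousWithinAt.comp (Continuous.continuousWithinAt (continuous_apply (0:ℤ)))
        (hfc x hx) (Set.mapsTo_univ _ _)
    have h1 : (fun y => f y 0) ⁻¹' {f x 0} ∈ 𝓝[X] x :=
      h0 ((mem_nhds_discrete).2 rfl)
    rw [mem_nhdsWithin] at h1
    obtain ⟨u, hu_open, hxu, hsub⟩ := h1
    obtain ⟨I, hI⟩ := exists_box_subset (hu_open.mem_nhds hxu)
    exact ⟨I, fun y hy hagree => hsub ⟨hI hagree, hy⟩⟩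
  choose! Ifun hIfun using key
  obtain ⟨t, htX, hcov⟩ := hcomp.elim_nhds_subcover
    (fun x => {y | ∀ i ∈ Ifun x, y i = x i}) (fun x _ => box_mem_nhds x (Ifun x))
  refine ⟨t.sup (fun x => (Ifun x).sup Int.natAbs), ?_⟩
  intro x hx x' hx' hagree
  have hx_mem := hcov hx
  simp only [Set.mem_iUnion, Set.mem_setOf_eq] at hx_mem
  obtain ⟨z, hzt, hxz⟩ := hx_mem
  have hz : z ∈ X := htX z hzt
  have hbound : ∀ i ∈ Ifun z, i.natAbs ≤ t.sup (fun x => (Ifun x).sup Int.natAbs) := by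
    intro i hi
    exact le_trans (Finset.le_sup hi) (Finset.le_sup (f := fun x => (Ifun x).sup Int.natAbs) hzt)
  have h1 : f x 0 = f z 0 := hIfun z hz x hx hxz
  have h2 : f x' 0 = f z 0 := by
    refine hIfun z hz x' hx' fun i hi => ?_
    rw [← hagree i (hbound i hi)]
    exact hxz i hi
  rw [h1, h2]

theorem exists_window {A : Type*} {X : Set (ℤ → A)} {N : ℕ} {x : ℤ → A}
    (hx : x ∈ sftCover X N) (b : ℤ) (L : ℕ) (hL : L ≤ N) :
    ∃ z ∈ X, ∀ k : ℕ, k < L → z k = x (b + k) := by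
  have hocc : occursAt x b (List.ofFn (fun k : Fin L => x (b + (k:ℕ)))) := by
    intro j
    rw [List.get_ofFn]
    simp
  have hlen : (List.ofFn fun k : Fin L => x (b + (k:ℕ))).length ≤ N := by
    rw [List.length_ofFn]; exact hL
  obtain ⟨z, hzX, hz⟩ := hx b _ hlen hocc
  refine ⟨z, hzX, fun k hk => ?_⟩
  have hk' : k < (List.ofFn fun k : Fin L => x (b + (k:ℕ))).length := by
    rw [List.length_ofFn]; exact hk
  have h2 := hz ⟨k, hk'⟩
  rw [List.get_ofFn] at h2
  simpa using h2

theorem sftCover_antitone {A : Type*} {X : Set (ℤ → A)} {n n' : ℕ} (h : n ≤ n') :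
    sftCover X n' ⊆ sftCover X n :=
  fun x hx i w hw hocc => hx i w (hw.trans h) hocc

theorem minPeriodPts_mono {A : Type*} {S T : Set (ℤ → A)} (h : S ⊆ T) (p : ℕ) :
    minPeriodPts S p ⊆ minPeriodPts T p :=
  fun x hx => ⟨h hx.1, hx.2⟩

theorem ext_lemma {A B : Type*} [Finite A] [TopologicalSpace A] [DiscreteTopology A]
    [TopologicalSpace B] [DiscreteTopology B]
    {X : Set (ℤ → A)} {Y : Set (ℤ → B)} (hX : IsSubshift X) (hY : IsSubshift Y)
    (f : (ℤ → A) → (ℤ → B)) (hf : Set.MapsTo f X Y)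
    (hfc : ContinuousOn f X)
    (hcomm : ∀ x ∈ X, f (shiftMap A x) = shiftMap B (f x)) :
    ∃ (r : ℕ) (F : (ℤ → A) → (ℤ → B)),
      (∀ x ∈ X, F x = f x) ∧
      (∀ (p : ℕ) (x : ℤ → A), F ((shiftMap A)^[p] x) = (shiftMap B)^[p] (F x)) ∧
      (∀ (M : ℕ) (x : ℤ → A), x ∈ sftCover X (M + 2*r) → F x ∈ sftCover Y M) ∧
      (∀ (x x' : ℤ → A) (i : ℤ),
        (∀ j : Fin (2*r+1), x (i - (r:ℤ) + (j:ℕ)) = x' (i - (r:ℤ) + (j:ℕ))) → F x i = F x' i) := by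
  classical
  obtain ⟨r, hrule⟩ := chl hX.2.1 f hfc
  obtain ⟨y0, hy0⟩ := hY.1
  set Φ : (Fin (2*r+1) → A) → B := fun w =>
    if h : ∃ z ∈ X, ∀ j : Fin (2*r+1), z (-(r:ℤ) + (j:ℕ)) = w j then f h.choose 0 else y0 0
    with hΦ
  set F : (ℤ → A) → (ℤ → B) := fun x i => Φ (fun j => x (i - (r:ℤ) + (j:ℕ))) with hF
  have ha : ∀ x ∈ X, F x = f x := by
    intro x hx
    funext i
    have hex : ∃ z ∈ X, ∀ j : Fin (2*r+1), z (-(r:ℤ) + (j:ℕ)) = x (i - (r:ℤ) + (j:ℕ)) := by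
      refine ⟨shiftZ i x, shiftZ_mem hX i hx, fun j => ?_⟩
      simp only [shiftZ]
      congr 1; ring
    have hFx : F x i = f hex.choose 0 := by
      simp only [hF, hΦ]
      rw [dif_pos hex]
    obtain ⟨hz1, hz2⟩ := hex.choose_spec
    rw [hFx]
    have h3 : f x i = f (shiftZ i x) 0 := by
      rw [map_shiftZ hX f hcomm i x hx]
      simp [shiftZ]
    rw [h3]
    apply hrule _ hz1 _ (shiftZ_mem hX i hx)
    intro j hj
    have hjr : ((j + (r:ℤ)).toNat : ℤ) = j + r := Int.toNat_of_nonneg (by omega)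
    have hlt : (j + (r:ℤ)).toNat < 2*r+1 := by omega
    have h4 := hz2 ⟨(j + (r:ℤ)).toNat, hlt⟩
    simp only at h4
    have e1 : -(r:ℤ) + (((j + (r:ℤ)).toNat : ℕ) : ℤ) = j := by omega
    have e2 : i - (r:ℤ) + (((j + (r:ℤ)).toNat : ℕ) : ℤ) = j + i := by omega
    rw [e1, e2] at h4
    simpa [shiftZ] using h4
  have hb1 : ∀ x, F (shiftMap A x) = shiftMap B (F x) := by
    intro x
    funext i
    simp only [hF, shiftMap]
    congr 1
    funext j
    congr 1
    ring
  have hb : ∀ (p : ℕ) (x : ℤ → A), F ((shiftMap A)^[p] x) = (shiftMap B)^[p] (F x) := by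
    intro p
    induction p with
    | zero => intro x; simp
    | succ p ih =>
        intro x
        rw [Function.iterate_succ_apply, ih (shiftMap A x), hb1 x,
          ← Function.iterate_succ_apply]
  have hd : ∀ (x x' : ℤ → A) (i : ℤ),
      (∀ j : Fin (2*r+1), x (i - (r:ℤ) + (j:ℕ)) = x' (i - (r:ℤ) + (j:ℕ))) → F x i = F x' i := by
    intro x x' i h
    simp only [hF]
    congr 1
    funext j
    exact h j
  refine ⟨r, F, ha, hb, ?_, hd⟩
  intro M x hx i w hw hocc
  obtain ⟨z, hzX, hz⟩ := exists_window hx (i - (r:ℤ)) (w.length + 2*r) (by omega)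
  have hz'X : shiftZ ((r:ℤ) - i) z ∈ X := shiftZ_mem hX _ hzX
  have hagree : ∀ n : ℤ, i - (r:ℤ) ≤ n → n < i - (r:ℤ) + (w.length + 2*r) →
      shiftZ ((r:ℤ) - i) z n = x n := by
    intro n h1 h2
    have hk := hz (n - (i - (r:ℤ))).toNat (by omega)
    simp only [shiftZ]
    have e1 : n + ((r:ℤ) - i) = (((n - (i - (r:ℤ))).toNat : ℕ) : ℤ) := by omega
    have e2 : i - (r:ℤ) + (((n - (i - (r:ℤ))).toNat : ℕ) : ℤ) = n := by omega
    rw [e1, hk, e2]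
  refine inLang_of_occursAt hY (hf hz'X) (i := i) ?_
  intro k
  rw [← ha _ hz'X]
  rw [← hocc k]
  apply hd _ _ (i + (k:ℕ))
  intro j
  have hk2 := k.isLt
  have hj2 := j.isLt
  have e3 : i + (k:ℕ) - (r:ℤ) + (j:ℕ) = i - (r:ℤ) + ((k:ℕ) + (j:ℕ)) := by push_cast; ring
  apply hagree
  · omega
  · omega

end PSAux

open PSAux

theorem period_stable_conjugacy_invariant {A B : Type*} [Fintype A] [Fintype B]
    [TopologicalSpace A] [DiscreteTopology A] [TopologicalSpace B] [DiscreteTopology B]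
    (X : Set (ℤ → A)) (Y : Set (ℤ → B))
    (hX : IsSubshift X) (hY : IsSubshift Y)
    (f : (ℤ → A) → (ℤ → B)) (g : (ℤ → B) → (ℤ → A))
    (hf : Set.MapsTo f X Y) (hg : Set.MapsTo g Y X)
    (hgf : ∀ x ∈ X, g (f x) = x) (hfg : ∀ y ∈ Y, f (g y) = y)
    (hfc : ContinuousOn f X) (hgc : ContinuousOn g Y)
    (hcomm : ∀ x ∈ X, f (shiftMap A x) = shiftMap B (f x))
    (hps : PeriodStable X) :
    PeriodStable Y := by
  have hgcomm : ∀ y ∈ Y, g (shiftMap B y) = shiftMap A (g y) := by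
    intro y hy
    have h1 : g y ∈ X := hg hy
    have h2 : shiftMap A (g y) ∈ X := shiftMap_mem hX h1
    have h3 : f (shiftMap A (g y)) = shiftMap B y := by
      rw [hcomm _ h1, hfg _ hy]
    rw [← h3, hgf _ h2]
  obtain ⟨r, F, haF, hbF, hcF, hdF⟩ := ext_lemma hX hY f hf hfc hcomm
  obtain ⟨s, G, haG, hbG, hcG, hdG⟩ := ext_lemma hY hX g hg hgc hgcomm
  -- F ∘ G = id on deep enough covers
  have hFG : ∀ N : ℕ, 2*r + 2*s + 1 ≤ N → ∀ y ∈ sftCover Y N, F (G y) = y := by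
    intro N hN y hy
    funext i
    obtain ⟨z, hzY, hz⟩ := exists_window hy (i - (r:ℤ) - (s:ℤ)) (2*r + 2*s + 1) hN
    have hz'Y : shiftZ ((r:ℤ) + s - i) z ∈ Y := shiftZ_mem hY _ hzY
    have hagree : ∀ n : ℤ, i - (r:ℤ) - s ≤ n → n ≤ i + (r:ℤ) + s →
        shiftZ ((r:ℤ) + s - i) z n = y n := by
      intro n h1 h2
      have hk := hz (n - (i - (r:ℤ) - s)).toNat (by omega)
      simp only [shiftZ]
      have e1 : n + ((r:ℤ) + s - i) = (((n - (i - (r:ℤ) - s)).toNat : ℕ) : ℤ) := by omega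
      have e2 : i - (r:ℤ) - s + (((n - (i - (r:ℤ) - s)).toNat : ℕ) : ℤ) = n := by omega
      rw [e1, hk, e2]
    have step1 : F (G y) i = F (G (shiftZ ((r:ℤ) + s - i) z)) i := by
      apply hdF _ _ i
      intro j
      apply (hdG _ _ _ _).symm
      intro k
      have hj2 := j.isLt
      have hk2 := k.isLt
      refine hagree ?_ ?_ ?_ <;> omega
    have step2 : F (G (shiftZ ((r:ℤ) + s - i) z)) i = shiftZ ((r:ℤ) + s - i) z i := by
      rw [haG _ hz'Y, haF _ (hg hz'Y), hfg _ hz'Y]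
    rw [step1, step2, hagree i (by omega) (by omega)]
  intro m
  obtain ⟨n, p, hp, hEq⟩ := hps (m + (2*r + 2*s) + (2*r + 1))
  set n₀ := n + 2*r + 1 with hn₀
  have hXmid : minPeriodPts (sftCover X n₀) p
      = minPeriodPts (sftCover X (n₀ + (m + (2*r + 2*s)))) p := by
    apply Set.Subset.antisymm
    · intro x hx
      have h1 : x ∈ minPeriodPts (sftCover X n) p :=
        minPeriodPts_mono (sftCover_antitone (by omega)) p hx
      rw [hEq] at h1
      have e : n + (m + (2*r + 2*s) + (2*r + 1)) = n₀ + (m + (2*r + 2*s)) := by omega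
      rw [e] at h1
      exact h1
    · exact minPeriodPts_mono (sftCover_antitone (by omega)) p
  refine ⟨n₀ + 2*s, p, hp, ?_⟩
  apply Set.Subset.antisymm
  · rintro y ⟨hyC, hyp, hymin⟩
    have hGy : G y ∈ sftCover X n₀ := hcG n₀ y hyC
    have hFGy : F (G y) = y := hFG (n₀ + 2*s) (by omega) y hyC
    have hper : (shiftMap A)^[p] (G y) = G y := by
      rw [← hbG p y, hyp]
    have hmin : ∀ q : ℕ, 0 < q → q < p → (shiftMap A)^[q] (G y) ≠ G y := by
      intro q hq1 hq2 h
      apply hymin q hq1 hq2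
      calc (shiftMap B)^[q] y = (shiftMap B)^[q] (F (G y)) := by rw [hFGy]
        _ = F ((shiftMap A)^[q] (G y)) := (hbF q _).symm
        _ = F (G y) := by rw [h]
        _ = y := hFGy
    have hmem : G y ∈ minPeriodPts (sftCover X n₀) p := ⟨hGy, hper, hmin⟩
    rw [hXmid] at hmem
    have hGy2 : G y ∈ sftCover X ((n₀ + 2*s + m) + 2*r) := by
      have e : (n₀ + 2*s + m) + 2*r = n₀ + (m + (2*r + 2*s)) := by omega
      rw [e]
      exact hmem.1
    refine ⟨?_, hyp, hymin⟩
    rw [← hFGy]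
    exact hcF _ _ hGy2
  · exact minPeriodPts_mono (sftCover_antitone (by omega)) p
end

section
/- Let X be a transitive nearest-neighbor SFT on s letters that is infinite. Then h_top(X) ≥ (ln 2)/s. -/
open Filter Topology MeasureTheory Set

section NNProof

open Filter

variable {A : Type*} {X : Set (ℤ → A)}

/-! ### Basic language lemmas -/

lemma nn_occursAt_shift (x : ℤ → A) (k i : ℤ) (w : List A) :
    occursAt (fun n => x (n + k)) i w ↔ occursAt x (i + k) w := by
  unfold occursAt
  constructor <;> intro h j <;> have hj := h j
  · rw [show i + k + (j:ℕ) = i + (j:ℕ) + k by ring]; exact hj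
  · show x (i + (j:ℕ) + k) = _
    rw [show i + (j:ℕ) + k = i + k + (j:ℕ) by ring]; exact hj

lemma nn_mem_shift (hsft : IsNNSFT X) {x : ℤ → A} (hx : x ∈ X) (k : ℤ) :
    (fun n => x (n + k)) ∈ X := by
  obtain ⟨F, _, rfl⟩ := hsft
  intro i w hw hocc
  rw [nn_occursAt_shift] at hocc
  exact hx (i + k) w hw hocc

lemma nn_occursAt_inLang (hsft : IsNNSFT X) {x : ℤ → A} (hx : x ∈ X) {i : ℤ} {w : List A}
    (h : occursAt x i w) : inLang X w :=
  ⟨fun n => x (n + i), nn_mem_shift hsft hx i, by rw [nn_occursAt_shift, zero_add]; exact h⟩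

lemma nn_inLang_infix (hsft : IsNNSFT X) {w l : List A} (hw : inLang X w) (hl : l <:+: w) :
    inLang X l := by
  obtain ⟨x, hx, hocc⟩ := hw
  obtain ⟨s, t, rfl⟩ := hl
  refine nn_occursAt_inLang hsft hx (i := (s.length : ℤ)) ?_
  intro j
  have hlen : (s.length + (j : ℕ)) < (s ++ l ++ t).length := by
    simp [List.length_append]; omega
  have := hocc ⟨s.length + (j : ℕ), hlen⟩
  rw [zero_add] at this
  push_cast at this
  rw [this]
  simp only [List.get_eq_getElem]
  rw [List.getElem_append_left (by simp), List.getElem_append_right (by omega)]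
  congr 1
  omega

lemma nn_glue (hsft : IsNNSFT X) {u w : List A} {m : A}
    (h1 : inLang X (u ++ [m])) (h2 : inLang X (m :: w)) :
    inLang X (u ++ m :: w) := by
  classical
  obtain ⟨x, hxX, hx⟩ := h1
  obtain ⟨y, hyX, hy⟩ := h2
  obtain ⟨F, hF2, hXeq⟩ := hsft
  subst hXeq
  have hxm : x (u.length : ℤ) = m := by
    have := hx ⟨u.length, by simp⟩
    rw [zero_add] at this
    simpa using this
  have hym : y 0 = m := by
    have := hy ⟨0, by simp⟩
    simpa using this
  set z : ℤ → A := fun i => if i < (u.length:ℤ) then x i else y (i - u.length) with hzdef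
  have hz1 : ∀ i : ℤ, i ≤ (u.length:ℤ) → z i = x i := by
    intro i hi
    rcases lt_or_eq_of_le hi with h | h
    · simp [hzdef, h]
    · subst h; simp [hzdef, hxm, hym]
  have hz2 : ∀ i : ℤ, (u.length:ℤ) ≤ i → z i = y (i - u.length) := by
    intro i hi
    have : ¬ (i < (u.length:ℤ)) := not_lt.mpr hi
    simp [hzdef, this]
  refine ⟨z, ?_, ?_⟩
  · intro i w' hw' hocc
    by_cases hc : (u.length:ℤ) ≤ i
    · refine hyX (i - u.length) w' hw' (fun j => ?_)
      have hj := hocc j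
      rw [hz2 _ (by have := j.2; omega)] at hj
      rw [show i - u.length + (j:ℕ) = i + (j:ℕ) - u.length by ring]
      exact hj
    · refine hxX i w' hw' (fun j => ?_)
      have hj := hocc j
      rwa [hz1 _ (by have h2 := hF2 w' hw'; have h3 := j.2; omega)] at hj
  · intro j
    have hj2 : (j:ℕ) < u.length + (w.length + 1) := by
      have := j.2; simpa [List.length_append] using this
    rw [zero_add]
    by_cases hc : (j:ℕ) < u.length
    · rw [hz1 _ (by exact_mod_cast hc.le)]
      have := hx ⟨(j:ℕ), by simp; omega⟩
      rw [zero_add] at this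
      rw [this]
      simp only [List.get_eq_getElem]
      rw [List.getElem_append_left hc, List.getElem_append_left hc]
    · push_neg at hc
      rw [hz2 _ (by exact_mod_cast hc)]
      have hlt : (j:ℕ) - u.length < (m::w).length := by simp; omega
      have := hy ⟨(j:ℕ) - u.length, hlt⟩
      rw [zero_add] at this
      rw [show ((j:ℕ):ℤ) - (u.length:ℤ) = (((j:ℕ) - u.length : ℕ) : ℤ) by push_cast [hc]; ring]
      rw [this]
      simp only [List.get_eq_getElem]
      rw [List.getElem_append_right hc]

/-! ### The transition graph -/

/-- The transition relation of the language. -/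
def nnE (X : Set (ℤ → A)) (a b : A) : Prop := inLang X [a, b]

lemma nnE_fst (hsft : IsNNSFT X) {a b : A} (h : nnE X a b) : inLang X [a] :=
  nn_inLang_infix hsft h ⟨[], [b], rfl⟩

lemma nnE_snd (hsft : IsNNSFT X) {a b : A} (h : nnE X a b) : inLang X [b] :=
  nn_inLang_infix hsft h ⟨[a], [], rfl⟩

lemma nn_word_chain (hsft : IsNNSFT X) :
    ∀ (l : List A) (a : A), inLang X (a :: l) → List.Chain (nnE X) a l := by
  intro l
  induction l with
  | nil => intro a _; exact List.Chain.nil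
  | cons b t ih =>
    intro a h
    refine List.chain_cons.mpr ⟨?_, ih b ?_⟩
    · exact nn_inLang_infix hsft h ⟨[], t, rfl⟩
    · exact nn_inLang_infix hsft h ⟨[a], [], by simp⟩

lemma nn_chain_inLang (hsft : IsNNSFT X) :
    ∀ (l : List A) (a : A), l ≠ [] → List.Chain (nnE X) a l → inLang X (a :: l) := by
  intro l
  induction l with
  | nil => intro a h _; exact absurd rfl h
  | cons b t ih =>
    intro a _ hchain
    rw [List.Chain, List.chain_cons] at hchain
    cases t with
    | nil => exact hchain.1
    | cons c t' =>
      have h2 : inLang X (b :: c :: t') := ih b (by simp) hchain.2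
      have := nn_glue hsft (u := [a]) (m := b) (w := c :: t') hchain.1 h2
      simpa using this

lemma nn_point_letter (hsft : IsNNSFT X) {x : ℤ → A} (hx : x ∈ X) (i : ℤ) :
    inLang X [x i] := by
  refine nn_occursAt_inLang hsft hx (i := i) ?_
  intro j
  have : (j : ℕ) = 0 := Nat.lt_one_iff.mp (by simpa using j.isLt)
  simp [this]

lemma nn_point_pair (hsft : IsNNSFT X) {x : ℤ → A} (hx : x ∈ X) (i : ℤ) :
    nnE X (x i) (x (i + 1)) := by
  refine nn_occursAt_inLang hsft hx (i := i) ?_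
  intro j
  have hj : (j : ℕ) < 2 := by simpa using j.isLt
  have : (j : ℕ) = 0 ∨ (j : ℕ) = 1 := by omega
  rcases this with h | h <;> simp [h]

lemma nn_reach (hsft : IsNNSFT X) (htrans : LangTransitive X) {a b : A}
    (ha : inLang X [a]) (hb : inLang X [b]) : Relation.ReflTransGen (nnE X) a b := by
  obtain ⟨w, hw⟩ := htrans [a] [b] ha hb
  have hw' : inLang X (a :: (w ++ [b])) := by simpa using hw
  have hchain := nn_word_chain hsft _ _ hw'
  refine List.relationReflTransGen_of_exists_isChain_cons _ hchain ?_
  have h1 := List.getLast?_eq_getLast_of_ne_nil (l := a :: (w ++ [b])) (List.cons_ne_nil _ _)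
  have h2 : (a :: (w ++ [b])).getLast? = some b := by
    rw [show a :: (w ++ [b]) = (a :: w) ++ [b] by simp]
    exact List.getLast?_concat
  exact Option.some_inj.mp (h1.symm.trans h2)

/-! ### Chain shortening -/

lemma nn_chain_shorten {α : Type*} {r : α → α → Prop} :
    ∀ (n : ℕ) (l : List α) (a : α), l.length ≤ n → List.Chain r a l →
    ∃ l', List.Chain r a l' ∧ (a::l').getLast? = (a::l).getLast? ∧ (a::l').Nodup ∧ l' ⊆ l := by
  intro n
  induction n with
  | zero =>
    intro l a hl _
    have : l = [] := List.eq_nil_of_length_eq_zero (Nat.le_zero.mp hl)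
    subst this
    exact ⟨[], List.Chain.nil, rfl, List.nodup_singleton a, by simp⟩
  | succ n ih =>
    intro l a hl hchain
    by_cases ha : a ∈ l
    · obtain ⟨s, t, rfl⟩ := List.append_of_mem ha
      have h2 : List.Chain r a t := (List.isChain_cons_split.mp hchain).2
      obtain ⟨l', hc, hlast, hnd, hsub⟩ := ih t a (by simp at hl ⊢; omega) h2
      refine ⟨l', hc, ?_, hnd, ?_⟩
      swap
      · intro x hx
        simp only [List.mem_append, List.mem_cons]
        exact Or.inr (Or.inr (hsub hx))
      rw [hlast]
      cases t with
      | nil => rw [show a :: (s ++ [a]) = (a :: s) ++ [a] by simp, List.getLast?_concat]; rfl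
      | cons c t =>
        rw [List.getLast?_cons_cons,
          show a :: (s ++ a :: c :: t) = (a :: s ++ [a]) ++ (c :: t) by simp,
          List.getLast?_append]
        have : (c :: t).getLast? = some ((c::t).getLast (by simp)) :=
          List.getLast?_eq_getLast_of_ne_nil (by simp)
        rw [this]
        rfl
    · cases l with
      | nil => exact ⟨[], List.Chain.nil, rfl, List.nodup_singleton a, by simp⟩
      | cons c t =>
        rw [List.Chain, List.chain_cons] at hchain
        obtain ⟨l', hc, hlast, hnd, hsub⟩ := ih t c (by simp at hl; omega) hchain.2
        refine ⟨c :: l', List.chain_cons.mpr ⟨hchain.1, hc⟩, ?_, ?_, ?_⟩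
        · rw [List.getLast?_cons_cons, List.getLast?_cons_cons]; exact hlast
        · refine List.nodup_cons.mpr ⟨?_, hnd⟩
          intro hmem
          rcases List.mem_cons.mp hmem with h | h
          · exact ha (h ▸ List.mem_cons_self)
          · exact ha (List.mem_cons.mpr (Or.inr (hsub h)))
        · exact List.cons_subset_cons c hsub

lemma nn_reach_nodup_chain {α : Type*} {r : α → α → Prop} {a b : α}
    (h : Relation.ReflTransGen r a b) :
    ∃ l, List.Chain r a l ∧ (a::l).getLast (List.cons_ne_nil _ _) = b ∧ (a::l).Nodup := by
  obtain ⟨l, hc, hlast⟩ := List.exists_isChain_cons_of_relationReflTransGen h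
  obtain ⟨l', hc', hlast', hnd, _⟩ := nn_chain_shorten l.length l a le_rfl hc
  refine ⟨l', hc', ?_, hnd⟩
  have h1 := List.getLast?_eq_getLast_of_ne_nil (l := a :: l') (List.cons_ne_nil _ _)
  have h2 := List.getLast?_eq_getLast_of_ne_nil (l := a :: l) (List.cons_ne_nil _ _)
  rw [h1, h2] at hlast'
  rw [Option.some_inj.mp hlast', hlast]

/-! ### Deterministic orbits (case of out-degree one) -/

lemma nn_det_orbit {α : Type*} {r : α → α → Prop}
    (hB : ∀ c x y, r c x → r c y → x = y) {e e' : ℕ → α} (h0 : e 0 = e' 0)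
    (h1 : ∀ n, r (e n) (e (n+1))) (h2 : ∀ n, r (e' n) (e' (n+1))) :
    ∀ n, e n = e' n := by
  intro n
  induction n with
  | zero => exact h0
  | succ n ih =>
    have hx := h1 n
    have hy := h2 n
    rw [← ih] at hy
    exact hB _ _ _ hx hy

lemma nn_per_iter {α : Type*} {e : ℕ → α} {P : ℕ} (hp : ∀ n, e (n + P) = e n) :
    ∀ (t n : ℕ), e (n + t * P) = e n := by
  intro t
  induction t with
  | zero => simp
  | succ t ih =>
    intro n
    rw [show n + (t+1) * P = (n + t * P) + P by ring, hp, ih]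

lemma nn_cycle_orbit {α : Type*} {r : α → α → Prop} {c d : α} {l : List α}
    (hc : List.Chain r c l) (hlast : (c :: l).getLast (List.cons_ne_nil _ _) = d)
    (hdc : r d c) :
    ∃ e : ℕ → α, e 0 = c ∧ (∀ n, r (e n) (e (n + 1))) ∧
      (∀ n, e (n + (l.length + 1)) = e n) ∧ e l.length = d := by
  have hch' : List.Chain' r (c :: l) := hc
  have hlen : (c :: l).length = l.length + 1 := rfl
  have hpos : 0 < (c :: l).length := by simp
  have hget : ∀ (m : ℕ) (hm : m < (c :: l).length),
      (c :: l).getD m c = (c :: l).get ⟨m, hm⟩ := by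
    intro m hm
    rw [List.getD_eq_getElem _ _ hm]
    rfl
  have hgetlast : ∀ hm : l.length < (c :: l).length, (c :: l).get ⟨l.length, hm⟩ = d := by
    intro hm
    have h := hlast
    rw [List.getLast_eq_getElem] at h
    simpa using h
  refine ⟨fun n => (c :: l).getD (n % (c :: l).length) c, ?_, ?_, ?_, ?_⟩
  · show (c :: l).getD (0 % (c :: l).length) c = c
    rw [Nat.zero_mod]
    simp
  · intro n
    show r ((c :: l).getD (n % (c :: l).length) c) ((c :: l).getD ((n + 1) % (c :: l).length) c)
    by_cases hi : n % (c :: l).length + 1 < (c :: l).length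
    · have h2 : (n + 1) % (c :: l).length = n % (c :: l).length + 1 := by
        rw [Nat.add_mod, Nat.mod_eq_of_lt (show 1 < (c :: l).length by omega),
          Nat.mod_eq_of_lt hi]
      rw [h2, hget _ (by omega), hget _ hi]
      exact List.isChain_iff_getElem.mp hch' (n % (c :: l).length) (by omega)
    · have hmlt := Nat.mod_lt n hpos
      have hieq : n % (c :: l).length = l.length := by omega
      have h2 : (n + 1) % (c :: l).length = 0 := by
        rw [Nat.add_mod, hieq]
        simp [hlen]
      rw [hieq, h2]
      have e1 : (c :: l).getD l.length c = d := by
        rw [hget _ (by omega)]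
        exact hgetlast _
      have e2 : (c :: l).getD 0 c = c := by simp
      rw [e1, e2]
      exact hdc
  · intro n
    show (c :: l).getD ((n + (l.length + 1)) % (c :: l).length) c
        = (c :: l).getD (n % (c :: l).length) c
    have h2 : (n + (l.length + 1)) % (c :: l).length = n % (c :: l).length := by
      rw [hlen]
      exact Nat.add_mod_right _ _
    rw [h2]
  · show (c :: l).getD (l.length % (c :: l).length) c = d
    have h2 : l.length % (c :: l).length = l.length := Nat.mod_eq_of_lt (by omega)
    rw [h2, hget _ (by omega)]
    exact hgetlast _

lemma nn_pred_unique (hsft : IsNNSFT X) (htrans : LangTransitive X)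
    (hB : ∀ c x y : A, nnE X c x → nnE X c y → x = y) {a b c : A}
    (h1 : nnE X a c) (h2 : nnE X b c) : a = b := by
  have hra : Relation.ReflTransGen (nnE X) c a :=
    nn_reach hsft htrans (nnE_snd hsft h1) (nnE_fst hsft h1)
  have hrb : Relation.ReflTransGen (nnE X) c b :=
    nn_reach hsft htrans (nnE_snd hsft h2) (nnE_fst hsft h2)
  obtain ⟨l₁, hc₁, hl₁⟩ := List.exists_isChain_cons_of_relationReflTransGen hra
  obtain ⟨l₂, hc₂, hl₂⟩ := List.exists_isChain_cons_of_relationReflTransGen hrb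
  obtain ⟨e, he0, hes, hep, hed⟩ := nn_cycle_orbit hc₁ hl₁ h1
  obtain ⟨e', he'0, he's, he'p, he'd⟩ := nn_cycle_orbit hc₂ hl₂ h2
  have hdet := nn_det_orbit hB (he0.trans he'0.symm) hes he's
  set m := l₁.length
  set k := l₂.length
  have hA : a = e (m + k * (m + 1)) := by rw [nn_per_iter hep, hed]
  have hBB : b = e' (k + m * (k + 1)) := by rw [nn_per_iter he'p, he'd]
  have harith : m + k * (m + 1) = k + m * (k + 1) := by ring
  rw [hA, hBB, harith, hdet]

lemma nn_caseB_finite [Finite A] (hsft : IsNNSFT X) (htrans : LangTransitive X)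
    (hB : ∀ c x y : A, nnE X c x → nnE X c y → x = y) : X.Finite := by
  have hinj : Function.Injective (fun x : X => (x : ℤ → A) 0) := by
    rintro ⟨x, hx⟩ ⟨y, hy⟩ h
    simp only at h
    have fwd : ∀ n : ℕ, x (n : ℤ) = y (n : ℤ) := by
      intro n
      induction n with
      | zero => simpa using h
      | succ n ih =>
        have hx1 := nn_point_pair hsft hx (n : ℤ)
        have hy1 := nn_point_pair hsft hy (n : ℤ)
        rw [← ih] at hy1
        have := hB _ _ _ hx1 hy1
        rw [show ((n + 1 : ℕ) : ℤ) = (n : ℤ) + 1 by push_cast; ring]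
        exact this
    have bwd : ∀ n : ℕ, x (-(n : ℤ)) = y (-(n : ℤ)) := by
      intro n
      induction n with
      | zero => simpa using h
      | succ n ih =>
        have hx1 := nn_point_pair hsft hx (-(n + 1 : ℤ))
        have hy1 := nn_point_pair hsft hy (-(n + 1 : ℤ))
        rw [show -(n + 1 : ℤ) + 1 = -(n : ℤ) by ring] at hx1 hy1
        rw [← ih] at hy1
        have := nn_pred_unique hsft htrans hB hx1 hy1
        rw [show (-((n + 1 : ℕ) : ℤ)) = -(n + 1 : ℤ) by push_cast; ring]
        exact this
    refine Subtype.ext (funext fun i => ?_)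
    obtain ⟨n, rfl | rfl⟩ := Int.eq_nat_or_neg i
    · exact fwd n
    · exact bwd n
  have : Finite X := Finite.of_injective _ hinj
  exact X.toFinite

/-! ### Existence of two cycles -/

lemma nn_build_cycle [Fintype A] (hsft : IsNNSFT X) (htrans : LangTransitive X)
    {v a : A} (hva : nnE X v a) :
    ∃ c : List A, (∃ t, c = v :: t) ∧ inLang X (c ++ [v]) ∧
      (c ++ [v])[1]? = some a ∧ c.length ≤ Fintype.card A := by
  have hreach : Relation.ReflTransGen (nnE X) a v :=
    nn_reach hsft htrans (nnE_snd hsft hva) (nnE_fst hsft hva)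
  obtain ⟨l, hchain, hlast, hnd⟩ := nn_reach_nodup_chain hreach
  refine ⟨v :: (a :: l).dropLast, ⟨_, rfl⟩, ?_, ?_, ?_⟩
  · have heq : (v :: (a :: l).dropLast) ++ [v] = v :: a :: l := by
      rw [List.cons_append]
      congr 1
      rw [← hlast]
      exact List.dropLast_append_getLast (List.cons_ne_nil _ _)
    rw [heq]
    exact nn_chain_inLang hsft (a :: l) v (by simp) (List.chain_cons.mpr ⟨hva, hchain⟩)
  · have heq : (v :: (a :: l).dropLast) ++ [v] = v :: a :: l := by
      rw [List.cons_append]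
      congr 1
      rw [← hlast]
      exact List.dropLast_append_getLast (List.cons_ne_nil _ _)
    rw [heq]
    simp
  · have : (v :: (a :: l).dropLast).length = (a :: l).length := by
      simp [List.length_dropLast]
    rw [this]
    exact hnd.length_le_card

lemma nn_two_cycles [Fintype A] (hsft : IsNNSFT X) (htrans : LangTransitive X)
    (hinf : X.Infinite) :
    ∃ (v a b : A) (c1 c2 : List A), a ≠ b ∧
      (∃ t, c1 = v :: t) ∧ (∃ t, c2 = v :: t) ∧
      inLang X (c1 ++ [v]) ∧ inLang X (c2 ++ [v]) ∧
      (c1 ++ [v])[1]? = some a ∧ (c2 ++ [v])[1]? = some b ∧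
      c1.length ≤ Fintype.card A ∧ c2.length ≤ Fintype.card A := by
  by_cases hB : ∀ c x y : A, nnE X c x → nnE X c y → x = y
  · exact absurd (nn_caseB_finite hsft htrans hB) hinf
  · push_neg at hB
    obtain ⟨v, a, b, hva, hvb, hab⟩ := hB
    obtain ⟨c1, hc1v, hL1, hm1, hp⟩ := nn_build_cycle hsft htrans hva
    obtain ⟨c2, hc2v, hL2, hm2, hq⟩ := nn_build_cycle hsft htrans hvb
    exact ⟨v, a, b, c1, c2, hab, hc1v, hc2v, hL1, hL2, hm1, hm2, hp, hq⟩

/-! ### Words built from two cycles -/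

/-- Concatenation of cycles indexed by a boolean word. -/
def nnW (c1 c2 : List A) (β : List Bool) : List A :=
  (β.map (fun i => if i then c2 else c1)).flatten

lemma nnW_nil (c1 c2 : List A) : nnW c1 c2 [] = [] := rfl

lemma nnW_cons (c1 c2 : List A) (i : Bool) (β : List Bool) :
    nnW c1 c2 (i :: β) = (if i then c2 else c1) ++ nnW c1 c2 β := by
  simp [nnW]

lemma nnW_head {c1 c2 : List A} {v : A} (hc1 : ∃ t, c1 = v :: t) (hc2 : ∃ t, c2 = v :: t) :
    ∀ β : List Bool, ∃ rest, nnW c1 c2 β ++ [v] = v :: rest := by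
  intro β
  cases β with
  | nil => exact ⟨[], rfl⟩
  | cons i β' =>
    obtain ⟨t1, h1⟩ := hc1
    obtain ⟨t2, h2⟩ := hc2
    rw [nnW_cons]
    cases i
    · exact ⟨t1 ++ (nnW c1 c2 β' ++ [v]), by simp [h1]⟩
    · exact ⟨t2 ++ (nnW c1 c2 β' ++ [v]), by simp [h2]⟩

lemma nnW_lang (hsft : IsNNSFT X) {c1 c2 : List A} {v : A}
    (hc1 : ∃ t, c1 = v :: t) (hc2 : ∃ t, c2 = v :: t)
    (hL1 : inLang X (c1 ++ [v])) (hL2 : inLang X (c2 ++ [v])) :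
    ∀ β : List Bool, inLang X (nnW c1 c2 β ++ [v]) := by
  have hv : inLang X [v] := nn_inLang_infix hsft hL1 ⟨c1, [], by simp⟩
  intro β
  induction β with
  | nil => simpa [nnW_nil] using hv
  | cons i β' ih =>
    obtain ⟨rest, hrest⟩ := nnW_head hc1 hc2 β'
    rw [nnW_cons, List.append_assoc, hrest]
    refine nn_glue hsft ?_ ?_
    · cases i
      · simpa using hL1
      · simpa using hL2
    · rw [← hrest]; exact ih

lemma nn_marker {v a : A} {c1 : List A} (hc1 : ∃ t, c1 = v :: t)
    (hm1 : (c1 ++ [v])[1]? = some a) :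
    ∀ rest : List A, rest.head? = some v → (c1 ++ rest)[1]? = some a := by
  obtain ⟨t, rfl⟩ := hc1
  intro rest hrest
  cases t with
  | nil =>
    simp only [List.cons_append, List.nil_append] at hm1 ⊢
    have ha : a = v := by simpa using hm1.symm
    cases rest with
    | nil => simp at hrest
    | cons r rs =>
      have : r = v := by simpa using hrest
      simp [this, ha]
  | cons x t' =>
    have hax : x = a := by simpa using hm1
    simp [hax]

lemma nnW_inj {c1 c2 : List A} {v a b : A} (hab : a ≠ b)
    (hc1 : ∃ t, c1 = v :: t) (hc2 : ∃ t, c2 = v :: t)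
    (hm1 : (c1 ++ [v])[1]? = some a) (hm2 : (c2 ++ [v])[1]? = some b) :
    ∀ β γ : List Bool, nnW c1 c2 β ++ [v] = nnW c1 c2 γ ++ [v] → β = γ := by
  have hlen1 : 1 ≤ c1.length := by obtain ⟨t, rfl⟩ := hc1; simp
  have hlen2 : 1 ≤ c2.length := by obtain ⟨t, rfl⟩ := hc2; simp
  have hlw : ∀ (i : Bool) (δ : List Bool), 1 ≤ (nnW c1 c2 (i :: δ)).length := by
    intro i δ
    rw [nnW_cons, List.length_append]
    have h1 : 1 ≤ (if i then c2 else c1).length := by cases i <;> simp [hlen1, hlen2]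
    omega
  intro β
  induction β with
  | nil =>
    intro γ h
    cases γ with
    | nil => rfl
    | cons j γ' =>
      exfalso
      have hl := congrArg List.length h
      rw [nnW_nil] at hl
      simp only [List.length_append, List.length_nil, List.length_cons] at hl
      have := hlw j γ'
      omega
  | cons i β' ih =>
    intro γ h
    cases γ with
    | nil =>
      exfalso
      have hl := congrArg List.length h
      rw [nnW_nil] at hl
      simp only [List.length_append, List.length_nil, List.length_cons] at hl
      have := hlw i β'
      omega
    | cons j γ' =>
      have hmark : ∀ (i : Bool) (δ : List Bool),
          (nnW c1 c2 (i :: δ) ++ [v])[1]? = some (if i then b else a) := by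
        intro i δ
        obtain ⟨rest, hrest⟩ := nnW_head hc1 hc2 δ
        rw [nnW_cons, List.append_assoc, hrest]
        cases i
        · exact nn_marker hc1 hm1 _ (by simp)
        · exact nn_marker hc2 hm2 _ (by simp)
      have hij : i = j := by
        have e1 := hmark i β'
        have e2 := hmark j γ'
        rw [h, e2] at e1
        have := Option.some_inj.mp e1
        cases i <;> cases j <;> simp_all
      subst hij
      rw [nnW_cons, nnW_cons, List.append_assoc, List.append_assoc] at h
      have := List.append_cancel_left h
      rw [ih γ' this]
end NNProof

section NNCount

open Filter

variable {A : Type*} {X : Set (ℤ → A)}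

lemma nn_words_inj [Fintype A] (X : Set (ℤ → A)) (n : ℕ) :
    Function.Injective
      (fun wp : {w : List A // w.length = n ∧ inLang X w} =>
        (fun i : Fin n => wp.1.get (Fin.cast wp.2.1.symm i))) := by
  rintro ⟨w, hw, hw2⟩ ⟨w', hw', hw2'⟩ h
  refine Subtype.ext ?_
  refine List.ext_get (hw.trans hw'.symm) ?_
  intro i h1 h2
  exact congrFun h ⟨i, hw ▸ h1⟩

lemma nn_words_finite [Fintype A] (X : Set (ℤ → A)) (n : ℕ) :
    Finite {w : List A // w.length = n ∧ inLang X w} :=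
  Finite.of_injective _ (nn_words_inj X n)

lemma nn_count_upper [Fintype A] (X : Set (ℤ → A)) (n : ℕ) :
    Nat.card {w : List A // w.length = n ∧ inLang X w} ≤ Fintype.card A ^ n := by
  classical
  have h := Nat.card_le_card_of_injective _ (nn_words_inj X n)
  rwa [Nat.card_eq_fintype_card (α := Fin n → A), Fintype.card_fun, Fintype.card_fin] at h

lemma nn_count_lower [Fintype A] (hsft : IsNNSFT X) {v a b : A} {c1 c2 : List A}
    (hab : a ≠ b) (hc1 : ∃ t, c1 = v :: t) (hc2 : ∃ t, c2 = v :: t)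
    (hL1 : inLang X (c1 ++ [v])) (hL2 : inLang X (c2 ++ [v]))
    (hm1 : (c1 ++ [v])[1]? = some a) (hm2 : (c2 ++ [v])[1]? = some b) (k : ℕ) :
    (2*k).choose k ≤
      Nat.card {w : List A // w.length = k*(c1.length + c2.length) + 1 ∧ inLang X w} := by
  classical
  haveI := nn_words_finite X (k*(c1.length + c2.length)+1)
  have hlen : ∀ S : Finset (Fin (2*k)), S.card = k →
      (nnW c1 c2 (List.ofFn (fun i => decide (i ∈ S))) ++ [v]).length
        = k*(c1.length + c2.length) + 1 := by
    intro S hS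
    rw [List.length_append, List.length_singleton]
    have h1 : (nnW c1 c2 (List.ofFn (fun i => decide (i ∈ S)))).length
        = ∑ i : Fin (2*k), (if i ∈ S then c2.length else c1.length) := by
      rw [nnW, List.length_flatten, List.map_map, List.map_ofFn, ← List.sum_ofFn]
      refine congrArg _ (congrArg List.ofFn (funext fun i => ?_))
      by_cases hi : i ∈ S <;> simp [Function.comp, hi]
    rw [h1]
    have e1 : ∑ i ∈ S, (if i ∈ S then c2.length else c1.length) = S.card * c2.length := by
      rw [Finset.sum_congr rfl (fun i hi => if_pos hi), Finset.sum_const, smul_eq_mul]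
    have e2 : ∑ i ∈ (Finset.univ \ S), (if i ∈ S then c2.length else c1.length)
        = (Finset.univ \ S).card * c1.length := by
      rw [Finset.sum_congr rfl (fun i hi => if_neg (Finset.mem_sdiff.mp hi).2),
        Finset.sum_const, smul_eq_mul]
    rw [← Finset.sum_sdiff (Finset.subset_univ S), e1, e2]
    have hcards : (Finset.univ \ S).card = 2*k - k := by
      rw [Finset.card_sdiff_of_subset (Finset.subset_univ S), Finset.card_univ, Fintype.card_fin, hS]
    rw [hcards, hS]
    have : 2*k - k = k := by omega
    rw [this]
    ring
  set Θ : {S : Finset (Fin (2*k)) // S.card = k} →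
      {w : List A // w.length = k*(c1.length + c2.length) + 1 ∧ inLang X w} :=
    fun S => ⟨nnW c1 c2 (List.ofFn (fun i => decide (i ∈ S.1))) ++ [v],
      hlen S.1 S.2, nnW_lang hsft hc1 hc2 hL1 hL2 _⟩ with hΘ
  have hinj : Function.Injective Θ := by
    rintro ⟨S, hS⟩ ⟨T, hT⟩ h
    have hw : nnW c1 c2 (List.ofFn (fun i => decide (i ∈ S))) ++ [v]
        = nnW c1 c2 (List.ofFn (fun i => decide (i ∈ T))) ++ [v] := by
      have := congrArg Subtype.val h
      simpa [hΘ] using this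
    have hβ := nnW_inj hab hc1 hc2 hm1 hm2 _ _ hw
    have hfn := List.ofFn_inj.mp hβ
    refine Subtype.ext (Finset.ext fun i => ?_)
    have := congrFun hfn i
    exact decide_eq_decide.mp this
  have hcard := Nat.card_le_card_of_injective Θ hinj
  have hc : Nat.card {S : Finset (Fin (2*k)) // S.card = k} = (2*k).choose k := by
    rw [Nat.card_eq_fintype_card, Fintype.card_finset_len, Fintype.card_fin]
  rw [← hc]
  exact hcard

end NNCount

section NNMain

open Filter

lemma nn_tendsto_aux (P : ℝ) (hP : 0 < P) :
    Tendsto (fun k : ℕ => (2*(k:ℝ)*Real.log 2 - Real.log (2*(k:ℝ)+1)) / ((k:ℝ)*P+1))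
      atTop (𝓝 (2*Real.log 2 / P)) := by
  have h0 : Tendsto (fun k : ℕ => Real.log (2*(k:ℝ)+1)/(k:ℝ)) atTop (𝓝 0) := by
    have hlog : Tendsto (fun x : ℝ => Real.log x / x) atTop (𝓝 0) :=
      Real.isLittleO_log_id_atTop.tendsto_div_nhds_zero
    have hu : Tendsto (fun k : ℕ => 2*(k:ℝ)+1) atTop atTop :=
      tendsto_atTop_add_const_right _ 1 (tendsto_natCast_atTop_atTop.const_mul_atTop two_pos)
    have h1 := hlog.comp hu
    have h2 : Tendsto (fun k : ℕ => (2*(k:ℝ)+1)/(k:ℝ)) atTop (𝓝 2) := by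
      have h3 : Tendsto (fun k : ℕ => 2 + 1/(k:ℝ)) atTop (𝓝 (2+0)) :=
        tendsto_const_nhds.add tendsto_one_div_atTop_nhds_zero_nat
      rw [add_zero] at h3
      refine h3.congr' ?_
      filter_upwards [Filter.eventually_ge_atTop 1] with k hk
      have hk0 : (k:ℝ) ≠ 0 := Nat.cast_ne_zero.mpr (by omega)
      field_simp
    have h4 := h1.mul h2
    rw [zero_mul] at h4
    refine h4.congr' ?_
    filter_upwards [Filter.eventually_ge_atTop 1] with k hk
    have hk0 : (k:ℝ) ≠ 0 := Nat.cast_ne_zero.mpr (by omega)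
    have h2k : (2*(k:ℝ)+1) ≠ 0 := by positivity
    show Real.log (2*(k:ℝ)+1)/(2*(k:ℝ)+1) * ((2*(k:ℝ)+1)/(k:ℝ)) = Real.log (2*(k:ℝ)+1)/(k:ℝ)
    field_simp
  have hnum : Tendsto (fun k : ℕ => 2*Real.log 2 - Real.log (2*(k:ℝ)+1)/(k:ℝ))
      atTop (𝓝 (2*Real.log 2 - 0)) := tendsto_const_nhds.sub h0
  have hden : Tendsto (fun k : ℕ => P + 1/(k:ℝ)) atTop (𝓝 (P+0)) :=
    tendsto_const_nhds.add tendsto_one_div_atTop_nhds_zero_nat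
  have hdiv := hnum.div hden (by rw [add_zero]; exact ne_of_gt hP)
  have hlim : (2*Real.log 2 - 0)/(P+0) = 2*Real.log 2 / P := by rw [sub_zero, add_zero]
  rw [hlim] at hdiv
  refine hdiv.congr' ?_
  filter_upwards [Filter.eventually_ge_atTop 1] with k hk
  have hk0 : (k:ℝ) ≠ 0 := Nat.cast_ne_zero.mpr (by omega)
  have hd1 : P + 1/(k:ℝ) ≠ 0 := by positivity
  have hd2 : (k:ℝ)*P+1 ≠ 0 := by positivity
  rw [Pi.div_apply]
  field_simp

theorem nnsft_entropy_lower_bound' {A : Type*} [Fintype A]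
    (X : Set (ℤ → A)) (hsft : IsNNSFT X) (htrans : LangTransitive X)
    (hinf : X.Infinite) :
    subshiftEntropy X ≥ Real.log 2 / (Fintype.card A : ℝ) := by
  classical
  obtain ⟨x₀, hx₀⟩ := hinf.nonempty
  haveI : Nonempty A := ⟨x₀ 0⟩
  have hs1 : 1 ≤ Fintype.card A := Fintype.card_pos
  obtain ⟨v, a, b, c1, c2, hab, hc1v, hc2v, hL1, hL2, hm1, hm2, hps, hqs⟩ :=
    nn_two_cycles hsft htrans hinf
  set s := Fintype.card A with hs
  set p := c1.length with hpdef
  set q := c2.length with hqdef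
  have hp1 : 1 ≤ p := by obtain ⟨t, ht⟩ := hc1v; rw [hpdef, ht]; simp
  have hq1 : 1 ≤ q := by obtain ⟨t, ht⟩ := hc2v; rw [hqdef, ht]; simp
  set g : ℕ → ℝ :=
    fun n => Real.log (Nat.card {w : List A // w.length = n ∧ inLang X w}) / n with hgdef
  rw [ge_iff_le]
  show Real.log 2 / (s : ℝ) ≤ limsup g atTop
  have hup : ∀ n, g n ≤ Real.log s := by
    intro n
    have hcle : Nat.card {w : List A // w.length = n ∧ inLang X w} ≤ s ^ n :=
      nn_count_upper X n
    have hlogs : (0:ℝ) ≤ Real.log s := Real.log_nonneg (by exact_mod_cast hs1)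
    rw [hgdef]
    simp only
    rcases Nat.eq_zero_or_pos (Nat.card {w : List A // w.length = n ∧ inLang X w}) with h0 | hpos
    · rw [h0]
      simp [Real.log_zero, hlogs]
    · have hlog := Real.log_le_log (by exact_mod_cast hpos)
        (show ((Nat.card {w : List A // w.length = n ∧ inLang X w} : ℝ)) ≤ ((s:ℝ))^n by
          exact_mod_cast hcle)
      rw [Real.log_pow] at hlog
      rcases Nat.eq_zero_or_pos n with hn | hn
      · rw [hn]; simpa using hlogs
      · rw [div_le_iff₀ (by exact_mod_cast hn)]
        calc Real.log (Nat.card {w : List A // w.length = n ∧ inLang X w})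
            ≤ (n:ℝ) * Real.log s := hlog
          _ = Real.log s * n := by ring
  have hbdd : IsBoundedUnder (· ≤ ·) atTop g := isBoundedUnder_of ⟨Real.log s, hup⟩
  have hchoose : ∀ k : ℕ, 2*(k:ℝ)*Real.log 2 - Real.log (2*(k:ℝ)+1)
      ≤ Real.log ((2*k).choose k) := by
    intro k
    have hcpos : 0 < (2*k).choose k := Nat.choose_pos (by omega)
    have h4 : (4:ℝ)^k ≤ (2*(k:ℝ)+1) * ((2*k).choose k : ℝ) := by
      have := Nat.four_pow_le_two_mul_add_one_mul_central_binom k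
      exact_mod_cast this
    have hcpos' : (0:ℝ) < ((2*k).choose k : ℝ) := by exact_mod_cast hcpos
    have hl := Real.log_le_log (by positivity) h4
    rw [Real.log_pow, Real.log_mul (by positivity) (ne_of_gt hcpos')] at hl
    have h42 : Real.log 4 = 2 * Real.log 2 := by
      rw [show (4:ℝ) = 2^2 by norm_num, Real.log_pow]
      push_cast
      ring
    rw [h42] at hl
    linarith
  have hg_lower : ∀ k : ℕ, 1 ≤ k →
      (2*(k:ℝ)*Real.log 2 - Real.log (2*(k:ℝ)+1)) / ((k:ℝ)*((p:ℝ)+(q:ℝ))+1)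
        ≤ g (k*(p+q)+1) := by
    intro k hk
    have hcount : ((2*k).choose k : ℝ)
        ≤ (Nat.card {w : List A // w.length = k*(p+q)+1 ∧ inLang X w} : ℝ) := by
      exact_mod_cast nn_count_lower hsft hab hc1v hc2v hL1 hL2 hm1 hm2 k
    have hcpos' : (0:ℝ) < ((2*k).choose k : ℝ) := by
      exact_mod_cast Nat.choose_pos (show k ≤ 2*k by omega)
    have h1 : Real.log ((2*k).choose k)
        ≤ Real.log (Nat.card {w : List A // w.length = k*(p+q)+1 ∧ inLang X w}) :=
      Real.log_le_log hcpos' hcount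
    rw [hgdef]
    simp only
    have hcast : ((k*(p+q)+1 : ℕ) : ℝ) = (k:ℝ)*((p:ℝ)+(q:ℝ))+1 := by push_cast; ring
    rw [hcast]
    have hden : (0:ℝ) < (k:ℝ)*((p:ℝ)+(q:ℝ))+1 := by positivity
    apply div_le_div_of_nonneg_right ?_ hden.le
    · linarith [hchoose k]
  have hpq0 : (0:ℝ) < (p:ℝ)+(q:ℝ) := by
    have : (1:ℝ) ≤ (p:ℝ) := by exact_mod_cast hp1
    have : (1:ℝ) ≤ (q:ℝ) := by exact_mod_cast hq1
    linarith [show (1:ℝ) ≤ (p:ℝ) by exact_mod_cast hp1]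
  have hT := nn_tendsto_aux ((p:ℝ)+(q:ℝ)) hpq0
  have hLs : Real.log 2 / (s:ℝ) ≤ 2*Real.log 2 / ((p:ℝ)+(q:ℝ)) := by
    have hs0 : (0:ℝ) < (s:ℝ) := by exact_mod_cast lt_of_lt_of_le Nat.zero_lt_one hs1
    have hps' : (p:ℝ) ≤ (s:ℝ) := by exact_mod_cast hps
    have hqs' : (q:ℝ) ≤ (s:ℝ) := by exact_mod_cast hqs
    have hlog2 : 0 ≤ Real.log 2 := Real.log_nonneg one_le_two
    rw [div_le_div_iff₀ hs0 hpq0]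
    nlinarith
  refine le_of_forall_pos_le_add fun ε hε => ?_
  have hfreq : ∃ᶠ n in atTop, Real.log 2 / (s:ℝ) - ε ≤ g n := by
    rw [Filter.frequently_atTop]
    intro N
    have hev := hT.eventually (eventually_gt_nhds
      (show 2*Real.log 2 / ((p:ℝ)+(q:ℝ)) - ε < 2*Real.log 2 / ((p:ℝ)+(q:ℝ)) by linarith))
    obtain ⟨K, hK⟩ := Filter.eventually_atTop.mp hev
    refine ⟨(max (max K 1) N)*(p+q)+1, ?_, ?_⟩
    · have h1 : max (max K 1) N ≤ max (max K 1) N * (p+q) :=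
        Nat.le_mul_of_pos_right _ (by omega)
      have h2 : N ≤ max (max K 1) N := le_max_right _ _
      omega
    · have h1 := hK (max (max K 1) N) (le_trans (le_max_left _ _) (le_max_left _ _))
      have h2 := hg_lower (max (max K 1) N)
        (le_trans (le_max_right _ _) (le_max_left _ _))
      linarith
  have hle := Filter.le_limsup_of_frequently_le hfreq hbdd
  linarith

end NNMain


theorem nnsft_entropy_lower_bound {A : Type*} [Fintype A]
    (X : Set (ℤ → A)) (hsft : IsNNSFT X) (htrans : LangTransitive X)
    (hinf : X.Infinite) :
    subshiftEntropy X ≥ Real.log 2 / (Fintype.card A : ℝ) := nnsft_entropy_lower_bound' X hsft htrans hinf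
end
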